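/- Let E be a real inner product space, let g : E → ℝ be continuous, and let ỹ ∈ E satisfy HasGradientAt g j ỹ with j ≠ 0 and g ỹ = 0. Suppose ŷ = ỹ + λ • j for some real λ, that g ŷ > 0, and that ỹ minimises the distance to ŷ over the coherent manifold, i.e. dist ỹ ŷ ≤ dist z ŷ for every z with g z = 0. Then λ > 0. -/

import Mathlib

open RealInnerProductSpace

/-- For a base forecast `yhat = ytil + λ • j` in the strict hypograph of the
constraint, where `ytil` is the projection of `yhat` onto the coherent manifold,
the Lagrange multiplier `λ` is positive. -/
theorem lagrange_multiplier_pos_of_hypograph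
    {E : Type*} [NormedAddCommGroup E] [InnerProductSpace ℝ E] [CompleteSpace E]
    (g : E → ℝ) (hgc : Continuous g)
    (ytil j : E) (hgrad : HasGradientAt g j ytil) (hj : j ≠ 0) (h0 : g ytil = 0)
    (lam : ℝ) (yhat : E) (hyhat : yhat = ytil + lam • j)
    (hhyp : 0 < g yhat)
    (hmin : ∀ z : E, g z = 0 → dist ytil yhat ≤ dist z yhat) :
    0 < lam := by
  by_contra hlam
  push_neg at hlam
  -- lam ≠ 0
  have hlam0 : lam ≠ 0 := by
    rintro rfl
    simp [h0] at hyhat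
    rw [hyhat] at hhyp
    exact lt_irrefl _ (h0 ▸ hhyp)
  have hlamneg : lam < 0 := lt_of_le_of_ne hlam hlam0
  set φ : ℝ → ℝ := fun u => g (ytil + u • j) with hφ
  have hφ0 : φ 0 = 0 := by simp [hφ, h0]
  have hjn : (0:ℝ) < ‖j‖ := norm_pos_iff.mpr hj
  -- derivative of φ at 0 is ‖j‖²
  have hline : HasDerivAt (fun u : ℝ => ytil + u • j) j 0 := by
    simpa using ((hasDerivAt_id (0:ℝ)).smul_const j).const_add ytil
  have hfd : HasFDerivAt g (InnerProductSpace.toDual ℝ E j) ytil :=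
    hgrad.hasFDerivAt
  have hcomp : HasDerivAt φ ((inner ℝ j j : ℝ)) 0 := by
    have hfd' : HasFDerivAt g (InnerProductSpace.toDual ℝ E j) (ytil + (0:ℝ) • j) := by
      simpa using hfd
    have := hfd'.comp_hasDerivAt 0 hline
    simp only [InnerProductSpace.toDual_apply_apply] at this
    exact this
  have hderiv : HasDerivAt φ (‖j‖^2) 0 := by
    simpa [real_inner_self_eq_norm_sq] using hcomp
  -- slope tends to ‖j‖², so ∃ s ∈ (lam, 0), φ s < 0
  have hslope := hasDerivAt_iff_tendsto_slope.mp hderiv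
  have hev : ∀ᶠ u in nhdsWithin 0 {(0:ℝ)}ᶜ, 0 < slope φ 0 u :=
    hslope.eventually (eventually_gt_nhds (by positivity))
  have hmem : Set.Ioo lam 0 ∈ nhdsWithin (0:ℝ) (Set.Iio 0) := by
    apply mem_nhdsWithin.mpr
    exact ⟨Set.Ioi lam, isOpen_Ioi, hlamneg, fun x hx => ⟨hx.1, hx.2⟩⟩
  have hle : nhdsWithin (0:ℝ) (Set.Iio 0) ≤ nhdsWithin 0 {(0:ℝ)}ᶜ :=
    nhdsWithin_mono 0 (fun x hx => ne_of_lt hx)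
  obtain ⟨s, hs1, hs2⟩ := ((hev.filter_mono hle).and
    (Filter.eventually_of_mem hmem (fun x hx => hx))).exists
  obtain ⟨hslam, hs0⟩ := hs2
  have hφs : φ s < 0 := by
    have : slope φ 0 s = φ s / s := by simp [slope, hφ0, div_eq_inv_mul]
    rw [this] at hs1
    rcases lt_trichotomy (φ s) 0 with h | h | h
    · exact h
    · rw [h] at hs1; simp at hs1
    · exfalso
      have : φ s / s < 0 := div_neg_of_pos_of_neg h hs0
      linarith
  -- IVT on [lam, s]
  have hφc : Continuous φ := hgc.comp (by continuity)
  have hφlam : 0 < φ lam := by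
    have : φ lam = g yhat := by rw [hφ, hyhat]
    rw [this]; exact hhyp
  have hiv : (0:ℝ) ∈ Set.Ioo (φ s) (φ lam) := ⟨hφs, hφlam⟩
  obtain ⟨u, hu, hgu⟩ := intermediate_value_Ioo' (le_of_lt hslam)
    hφc.continuousOn hiv
  -- contradiction with hmin
  have hz := hmin (ytil + u • j) hgu
  have hd1 : dist ytil yhat = (-lam) * ‖j‖ := by
    rw [hyhat, dist_eq_norm]
    simp [norm_smul, abs_of_neg hlamneg]
  have hd2 : dist (ytil + u • j) yhat = (u - lam) * ‖j‖ := by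
    rw [hyhat, dist_eq_norm]
    have : ytil + u • j - (ytil + lam • j) = (u - lam) • j := by
      rw [sub_smul]; abel
    rw [this, norm_smul, Real.norm_eq_abs, abs_of_pos (by linarith [hu.1])]
  rw [hd1, hd2] at hz
  have hu0 : u < 0 := lt_trans hu.2 hs0
  nlinarith
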